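/- Let X^n be a random vector on {0,1}^n and let S ⊆ {1,...,n} be a random subset, independent of X^n, that includes each index independently with probability t. Then E_S[H(X_S)] ≥ t·H(X^n), where X_S denotes the restriction of X^n to the coordinates in S. -/

import Mathlib

open Finset

/-- Shannon entropy (in bits) of a pmf on a finite type (convention `0·log 0 = 0`
holds since `Real.logb 2 0 = 0`). -/
noncomputable def H2 {α : Type*} [Fintype α] (p : α → ℝ) : ℝ :=
  -∑ x, p x * Real.logb 2 (p x)

/-- `p` is a probability mass function. -/
def IsPMF {α : Type*} [Fintype α] (p : α → ℝ) : Prop :=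
  (∀ x, 0 ≤ p x) ∧ ∑ x, p x = 1

/-- Left marginal of a joint pmf. -/
noncomputable def margL {α β : Type*} [Fintype α] [Fintype β] (p : α × β → ℝ) : α → ℝ :=
  fun a => ∑ b, p (a, b)

/-- Right marginal of a joint pmf. -/
noncomputable def margR {α β : Type*} [Fintype α] [Fintype β] (p : α × β → ℝ) : β → ℝ :=
  fun b => ∑ a, p (a, b)

/-- Mutual information (in bits) of a joint pmf: `I = H(X) + H(Y) - H(X,Y)`. -/
noncomputable def MI {α β : Type*} [Fintype α] [Fintype β] (p : α × β → ℝ) : ℝ :=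
  H2 (margL p) + H2 (margR p) - H2 p

/-- The pmf of the restriction `X_S` of `Xⁿ` to the coordinates in `s`
(unobserved coordinates are replaced by the erasure symbol `none`). -/
noncomputable def maskPMF (n : ℕ) (p : (Fin n → Bool) → ℝ) (s : Finset (Fin n)) :
    (Fin n → Option Bool) → ℝ :=
  fun y => ∑ x, if (fun i => if i ∈ s then some (x i) else none) = y then p x else 0

namespace Shearer

variable {n : ℕ}

def phi (s : Finset (Fin n)) (x : Fin n → Bool) : Fin n → Option Bool :=
  fun i => if i ∈ s then some (x i) else none

lemma phi_eq_iff {s : Finset (Fin n)} {x y : Fin n → Bool} :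
    phi s x = phi s y ↔ ∀ i ∈ s, x i = y i := by
  constructor
  · intro h i hi
    have := congrFun h i
    simpa [phi, hi] using this
  · intro h
    funext i
    by_cases hi : i ∈ s <;> simp [phi, hi]
    exact h i hi

lemma phi_mono {s w : Finset (Fin n)} (hsw : s ⊆ w) {x y : Fin n → Bool}
    (h : phi w x = phi w y) : phi s x = phi s y := by
  rw [phi_eq_iff] at h ⊢
  exact fun i hi => h i (hsw hi)

lemma phi_union_iff {a b : Finset (Fin n)} {x y : Fin n → Bool} :
    phi (a ∪ b) x = phi (a ∪ b) y ↔ (phi a x = phi a y ∧ phi b x = phi b y) := by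
  simp only [phi_eq_iff, mem_union]
  constructor
  · exact fun h => ⟨fun i hi => h i (Or.inl hi), fun i hi => h i (Or.inr hi)⟩
  · rintro ⟨h1, h2⟩ i (hi | hi)
    · exact h1 i hi
    · exact h2 i hi

noncomputable def Q (p : (Fin n → Bool) → ℝ) (s : Finset (Fin n)) (x : Fin n → Bool) : ℝ :=
  ∑ v, if phi s v = phi s x then p v else 0

lemma maskPMF_phi (p : (Fin n → Bool) → ℝ) (s : Finset (Fin n)) (x : Fin n → Bool) :
    maskPMF n p s (phi s x) = Q p s x := rfl

lemma hform (p : (Fin n → Bool) → ℝ) (s : Finset (Fin n)) :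
    H2 (maskPMF n p s) = -∑ x, p x * Real.logb 2 (Q p s x) := by
  unfold H2
  congr 1
  have : ∀ y, maskPMF n p s y = ∑ x, if phi s x = y then p x else 0 := fun _ => rfl
  calc ∑ y, maskPMF n p s y * Real.logb 2 (maskPMF n p s y)
      = ∑ y, ∑ x, (if phi s x = y then p x * Real.logb 2 (maskPMF n p s y) else 0) := by
        refine Finset.sum_congr rfl fun y _ => ?_
        rw [this y, Finset.sum_mul]
        exact Finset.sum_congr rfl fun x _ => by split_ifs <;> simp
    _ = ∑ x, ∑ y, (if phi s x = y then p x * Real.logb 2 (maskPMF n p s y) else 0) :=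
        Finset.sum_comm
    _ = ∑ x, p x * Real.logb 2 (Q p s x) := by
        refine Finset.sum_congr rfl fun x _ => ?_
        rw [Finset.sum_ite_eq]
        simp [maskPMF_phi]


lemma Q_nonneg {p : (Fin n → Bool) → ℝ} (hp0 : ∀ x, 0 ≤ p x) (s : Finset (Fin n))
    (x : Fin n → Bool) : 0 ≤ Q p s x :=
  Finset.sum_nonneg fun v _ => by split_ifs; exacts [hp0 v, le_refl 0]

lemma le_Q {p : (Fin n → Bool) → ℝ} (hp0 : ∀ x, 0 ≤ p x) (s : Finset (Fin n))
    (x : Fin n → Bool) : p x ≤ Q p s x := by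
  have := Finset.single_le_sum (f := fun v => if phi s v = phi s x then p v else 0)
    (fun v _ => by split_ifs; exacts [hp0 v, le_refl 0]) (Finset.mem_univ x)
  simpa [Q] using this

/-- cross-class mass -/
noncomputable def M (p : (Fin n → Bool) → ℝ) (a b : Finset (Fin n))
    (v u : Fin n → Bool) : ℝ :=
  ∑ w, if phi a v = phi a w ∧ phi b u = phi b w then p w else 0

lemma sumT (p : (Fin n → Bool) → ℝ) (hp : IsPMF p) (a b : Finset (Fin n)) :
    ∑ x, p x * (Q p a x * Q p b x) / (Q p (a ∪ b) x * Q p (a ∩ b) x) ≤ 1 := by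
  obtain ⟨hp0, hp1⟩ := hp
  have key : ∀ x, p x * (Q p a x * Q p b x) / (Q p (a ∪ b) x * Q p (a ∩ b) x)
      = ∑ v, ∑ u, (if phi a v = phi a x ∧ phi b u = phi b x
          then p x * (p v * p u) / (M p a b v u * Q p (a ∩ b) u) else 0) := by
    intro x
    rw [show Q p a x * Q p b x = ∑ v, ∑ u,
        (if phi a v = phi a x then p v else 0) * (if phi b u = phi b x then p u else 0) from
      Finset.sum_mul_sum _ _ _ _]
    rw [Finset.mul_sum, Finset.sum_div]
    refine Finset.sum_congr rfl fun v _ => ?_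
    rw [Finset.mul_sum, Finset.sum_div]
    refine Finset.sum_congr rfl fun u _ => ?_
    by_cases hA : phi a v = phi a x
    · by_cases hB : phi b u = phi b x
      · simp only [hA, hB, if_true, and_self]
        have hab : Q p (a ∪ b) x = M p a b v u := by
          unfold Q M
          refine Finset.sum_congr rfl fun w _ => ?_
          refine if_congr ?_ rfl rfl
          rw [phi_union_iff]
          constructor
          · rintro ⟨h1, h2⟩; exact ⟨hA.trans h1.symm, hB.trans h2.symm⟩
          · rintro ⟨h1, h2⟩; exact ⟨(hA.symm.trans h1).symm, (hB.symm.trans h2).symm⟩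
        have hi : Q p (a ∩ b) x = Q p (a ∩ b) u := by
          have h' : phi (a ∩ b) u = phi (a ∩ b) x := phi_mono inter_subset_right hB
          unfold Q
          rw [← h']
        rw [hab, hi]
      · simp [hB]
    · simp [hA]
  calc ∑ x, p x * (Q p a x * Q p b x) / (Q p (a ∪ b) x * Q p (a ∩ b) x)
      = ∑ v, ∑ u, ∑ x, (if phi a v = phi a x ∧ phi b u = phi b x
          then p x * (p v * p u) / (M p a b v u * Q p (a ∩ b) u) else 0) := by
        rw [Finset.sum_congr rfl fun x _ => key x]
        rw [Finset.sum_comm]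
        exact Finset.sum_congr rfl fun v _ => Finset.sum_comm
    _ = ∑ v, ∑ u, M p a b v u * (p v * p u / (M p a b v u * Q p (a ∩ b) u)) := by
        refine Finset.sum_congr rfl fun v _ => Finset.sum_congr rfl fun u _ => ?_
        have h1 : ∀ x, (if phi a v = phi a x ∧ phi b u = phi b x
            then p x * (p v * p u) / (M p a b v u * Q p (a ∩ b) u) else 0)
            = (if phi a v = phi a x ∧ phi b u = phi b x then p x else 0)
              * (p v * p u / (M p a b v u * Q p (a ∩ b) u)) := fun x => by
          split_ifs with h
          · rw [mul_div_assoc]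
          · rw [zero_mul]
        rw [Finset.sum_congr rfl fun x _ => h1 x, ← Finset.sum_mul]
        rfl
    _ ≤ ∑ v, ∑ u, (if phi (a ∩ b) v = phi (a ∩ b) u then p v else 0)
          * (p u / Q p (a ∩ b) u) := by
        refine Finset.sum_le_sum fun v _ => Finset.sum_le_sum fun u _ => ?_
        by_cases hM : M p a b v u = 0
        · rw [hM, zero_mul]
          refine mul_nonneg ?_ (div_nonneg (hp0 u) (Q_nonneg hp0 _ u))
          split_ifs; exacts [hp0 v, le_refl 0]
        · have hcls : phi (a ∩ b) v = phi (a ∩ b) u := by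
            obtain ⟨w, hw⟩ := Finset.exists_ne_zero_of_sum_ne_zero hM
            have hcond : phi a v = phi a w ∧ phi b u = phi b w := by
              by_contra hc
              simp [hc] at hw
            exact (phi_mono inter_subset_left hcond.1).trans
              (phi_mono inter_subset_right hcond.2).symm
          rw [hcls, if_pos rfl]
          rw [mul_div_assoc', mul_div_mul_left _ _ hM, mul_div_assoc]
    _ = ∑ u, Q p (a ∩ b) u * (p u / Q p (a ∩ b) u) := by
        rw [Finset.sum_comm]
        refine Finset.sum_congr rfl fun u _ => ?_
        rw [← Finset.sum_mul]
        rfl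
    _ ≤ ∑ u, p u := by
        refine Finset.sum_le_sum fun u _ => ?_
        by_cases hq : Q p (a ∩ b) u = 0
        · simp [hq, hp0 u]
        · rw [mul_div_cancel₀ _ hq]
    _ = 1 := hp1

lemma submod_log (p : (Fin n → Bool) → ℝ) (hp : IsPMF p) (a b : Finset (Fin n)) :
    ∑ x, p x * Real.log (Q p a x) + ∑ x, p x * Real.log (Q p b x)
      ≤ ∑ x, p x * Real.log (Q p (a ∪ b) x) + ∑ x, p x * Real.log (Q p (a ∩ b) x) := by
  obtain ⟨hp0, hp1⟩ := hp
  have hT : ∑ x, p x * (Q p a x * Q p b x / (Q p (a ∪ b) x * Q p (a ∩ b) x)) ≤ 1 := by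
    calc ∑ x, p x * (Q p a x * Q p b x / (Q p (a ∪ b) x * Q p (a ∩ b) x))
        = ∑ x, p x * (Q p a x * Q p b x) / (Q p (a ∪ b) x * Q p (a ∩ b) x) :=
          Finset.sum_congr rfl fun x _ => (mul_div_assoc _ _ _).symm
      _ ≤ 1 := sumT p ⟨hp0, hp1⟩ a b
  have hsum : ∑ x, (p x * (Q p a x * Q p b x / (Q p (a ∪ b) x * Q p (a ∩ b) x)) - p x) ≤ 0 := by
    rw [Finset.sum_sub_distrib, hp1]
    linarith
  have hterm : ∀ x, p x * Real.log (Q p a x) + p x * Real.log (Q p b x)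
      ≤ p x * Real.log (Q p (a ∪ b) x) + p x * Real.log (Q p (a ∩ b) x)
        + (p x * (Q p a x * Q p b x / (Q p (a ∪ b) x * Q p (a ∩ b) x)) - p x) := by
    intro x
    rcases eq_or_lt_of_le (hp0 x) with h0 | h0
    · rw [← h0]; simp
    · have hQa : 0 < Q p a x := lt_of_lt_of_le h0 (le_Q hp0 _ _)
      have hQb : 0 < Q p b x := lt_of_lt_of_le h0 (le_Q hp0 _ _)
      have hQab : 0 < Q p (a ∪ b) x := lt_of_lt_of_le h0 (le_Q hp0 _ _)
      have hQi : 0 < Q p (a ∩ b) x := lt_of_lt_of_le h0 (le_Q hp0 _ _)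
      have hr : 0 < Q p a x * Q p b x / (Q p (a ∪ b) x * Q p (a ∩ b) x) :=
        div_pos (mul_pos hQa hQb) (mul_pos hQab hQi)
      have hlog := Real.log_le_sub_one_of_pos hr
      rw [Real.log_div (mul_pos hQa hQb).ne' (mul_pos hQab hQi).ne',
        Real.log_mul hQa.ne' hQb.ne', Real.log_mul hQab.ne' hQi.ne'] at hlog
      have hmul := mul_le_mul_of_nonneg_left hlog h0.le
      nlinarith [hmul]
  calc ∑ x, p x * Real.log (Q p a x) + ∑ x, p x * Real.log (Q p b x)
      = ∑ x, (p x * Real.log (Q p a x) + p x * Real.log (Q p b x)) :=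
        (Finset.sum_add_distrib).symm
    _ ≤ ∑ x, (p x * Real.log (Q p (a ∪ b) x) + p x * Real.log (Q p (a ∩ b) x)
        + (p x * (Q p a x * Q p b x / (Q p (a ∪ b) x * Q p (a ∩ b) x)) - p x)) :=
        Finset.sum_le_sum fun x _ => hterm x
    _ = ∑ x, p x * Real.log (Q p (a ∪ b) x) + ∑ x, p x * Real.log (Q p (a ∩ b) x)
        + ∑ x, (p x * (Q p a x * Q p b x / (Q p (a ∪ b) x * Q p (a ∩ b) x)) - p x) := by
        rw [Finset.sum_add_distrib, Finset.sum_add_distrib]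
    _ ≤ ∑ x, p x * Real.log (Q p (a ∪ b) x) + ∑ x, p x * Real.log (Q p (a ∩ b) x) := by
        linarith

lemma submod (p : (Fin n → Bool) → ℝ) (hp : IsPMF p) (a b : Finset (Fin n)) :
    H2 (maskPMF n p (a ∪ b)) + H2 (maskPMF n p (a ∩ b)) ≤
      H2 (maskPMF n p a) + H2 (maskPMF n p b) := by
  have hlog2 : (0:ℝ) < Real.log 2 := Real.log_pos one_lt_two
  rw [hform, hform, hform, hform]
  have e : ∀ s : Finset (Fin n), ∑ x, p x * Real.logb 2 (Q p s x)
      = (∑ x, p x * Real.log (Q p s x)) / Real.log 2 := by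
    intro s
    rw [Finset.sum_div]
    exact Finset.sum_congr rfl fun x _ => by rw [Real.logb, mul_div_assoc]
  rw [e, e, e, e]
  have h := submod_log p hp a b
  have h2 : (∑ x, p x * Real.log (Q p a x) + ∑ x, p x * Real.log (Q p b x)) / Real.log 2
      ≤ (∑ x, p x * Real.log (Q p (a ∪ b) x) + ∑ x, p x * Real.log (Q p (a ∩ b) x))
        / Real.log 2 := by gcongr
  rw [add_div, add_div] at h2
  linarith


lemma tele (g : Finset (Fin n) → ℝ) (s : Finset (Fin n)) :
    ∑ i ∈ s, (g (s ∩ Finset.Iic i) - g (s ∩ Finset.Iio i)) = g s - g ∅ := by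
  induction s using Finset.strongInduction with
  | _ s ih =>
    rcases s.eq_empty_or_nonempty with rfl | hs
    · simp
    · have hmax : s.max' hs ∈ s := s.max'_mem hs
      set i := s.max' hs with hidef
      have hsplit := Finset.add_sum_erase s
        (fun j => g (s ∩ Finset.Iic j) - g (s ∩ Finset.Iio j)) hmax
      rw [← hsplit]
      have hIic : s ∩ Finset.Iic i = s := by
        apply Finset.inter_eq_left.mpr
        intro k hk
        exact Finset.mem_Iic.mpr (Finset.le_max' s k hk)
      have hIio : s ∩ Finset.Iio i = s.erase i := by
        ext k
        simp only [Finset.mem_inter, Finset.mem_Iio, Finset.mem_erase]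
        constructor
        · rintro ⟨hk, hlt⟩; exact ⟨ne_of_lt hlt, hk⟩
        · rintro ⟨hne, hk⟩
          exact ⟨hk, lt_of_le_of_ne (Finset.le_max' s k hk) hne⟩
      have hcongr : ∀ j ∈ s.erase i,
          g (s ∩ Finset.Iic j) - g (s ∩ Finset.Iio j)
            = g (s.erase i ∩ Finset.Iic j) - g (s.erase i ∩ Finset.Iio j) := by
        intro j hj
        obtain ⟨hne, hjs⟩ := Finset.mem_erase.mp hj
        have hji : j < i := lt_of_le_of_ne (Finset.le_max' s j hjs) hne
        have e1 : s ∩ Finset.Iic j = s.erase i ∩ Finset.Iic j := by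
          ext k
          simp only [Finset.mem_inter, Finset.mem_Iic, Finset.mem_erase]
          constructor
          · rintro ⟨hk, hle⟩
            exact ⟨⟨fun he => absurd (he ▸ hle) (not_le.mpr hji), hk⟩, hle⟩
          · rintro ⟨⟨_, hk⟩, hle⟩; exact ⟨hk, hle⟩
        have e2 : s ∩ Finset.Iio j = s.erase i ∩ Finset.Iio j := by
          ext k
          simp only [Finset.mem_inter, Finset.mem_Iio, Finset.mem_erase]
          constructor
          · rintro ⟨hk, hlt⟩
            exact ⟨⟨fun he => absurd (he ▸ hlt) (not_lt.mpr hji.le), hk⟩, hlt⟩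
          · rintro ⟨⟨_, hk⟩, hlt⟩; exact ⟨hk, hlt⟩
        rw [e1, e2]
      rw [Finset.sum_congr rfl hcongr, ih (s.erase i) (Finset.erase_ssubset hmax)]
      rw [hIic, hIio]
      ring

lemma Q_empty (p : (Fin n → Bool) → ℝ) (hp1 : ∑ x, p x = 1) (x : Fin n → Bool) :
    Q p ∅ x = 1 := by
  unfold Q
  rw [← hp1]
  refine Finset.sum_congr rfl fun v _ => ?_
  rw [if_pos]
  funext i
  simp [phi]

lemma h_empty (p : (Fin n → Bool) → ℝ) (hp1 : ∑ x, p x = 1) :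
    H2 (maskPMF n p ∅) = 0 := by
  rw [hform]
  simp [Q_empty p hp1]

lemma Q_univ (p : (Fin n → Bool) → ℝ) (x : Fin n → Bool) :
    Q p Finset.univ x = p x := by
  unfold Q
  have : ∀ v : Fin n → Bool, (phi Finset.univ v = phi Finset.univ x) ↔ v = x := by
    intro v
    rw [phi_eq_iff]
    constructor
    · intro h; funext i; exact h i (Finset.mem_univ i)
    · rintro rfl; exact fun _ _ => rfl
  rw [Finset.sum_congr rfl fun v _ => if_congr (this v) rfl rfl]
  simp

lemma h_univ (p : (Fin n → Bool) → ℝ) :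
    H2 (maskPMF n p Finset.univ) = H2 p := by
  rw [hform]
  unfold H2
  congr 1
  exact Finset.sum_congr rfl fun x _ => by rw [Q_univ]

lemma powsum (t : ℝ) (u : Finset (Fin n)) :
    ∑ s ∈ u.powerset, t ^ s.card * (1 - t) ^ (u.card - s.card) = 1 := by
  have h := Finset.prod_add (fun _ : Fin n => t) (fun _ : Fin n => 1 - t) u
  simp only [add_sub_cancel, Finset.prod_const, one_pow] at h
  refine Eq.trans (Finset.sum_congr rfl fun s hs => ?_) h.symm
  rw [Finset.card_sdiff_of_subset (Finset.mem_powerset.mp hs)]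

lemma wsum (t : ℝ) (i : Fin n) :
    ∑ s : Finset (Fin n), (if i ∈ s then t ^ s.card * (1 - t) ^ (n - s.card) else 0) = t := by
  rw [← Finset.powerset_univ, ← Finset.insert_erase (Finset.mem_univ i),
    Finset.sum_powerset_insert (Finset.notMem_erase i Finset.univ)]
  have hcard : (Finset.univ.erase i).card = n - 1 := by
    rw [Finset.card_erase_of_mem (Finset.mem_univ i), Finset.card_univ, Fintype.card_fin]
  have h1 : ∑ s ∈ (Finset.univ.erase i).powerset,
      (if i ∈ s then t ^ s.card * (1 - t) ^ (n - s.card) else 0) = 0 := by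
    refine Finset.sum_eq_zero fun s hs => ?_
    rw [if_neg]
    intro hi
    exact Finset.notMem_erase i Finset.univ (Finset.mem_powerset.mp hs hi)
  have h2 : ∑ s ∈ (Finset.univ.erase i).powerset,
      (if i ∈ insert i s then t ^ (insert i s).card * (1 - t) ^ (n - (insert i s).card) else 0)
      = t := by
    have := powsum t (Finset.univ.erase i)
    rw [hcard] at this
    calc ∑ s ∈ (Finset.univ.erase i).powerset,
        (if i ∈ insert i s then t ^ (insert i s).card * (1 - t) ^ (n - (insert i s).card) else 0)
        = ∑ s ∈ (Finset.univ.erase i).powerset,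
          t * (t ^ s.card * (1 - t) ^ (n - 1 - s.card)) := by
          refine Finset.sum_congr rfl fun s hs => ?_
          have hnotin : i ∉ s := fun hi =>
            Finset.notMem_erase i Finset.univ (Finset.mem_powerset.mp hs hi)
          have hscard : s.card ≤ n - 1 := by
            rw [← hcard]
            exact Finset.card_le_card (Finset.mem_powerset.mp hs)
          rw [if_pos (Finset.mem_insert_self i s), Finset.card_insert_of_notMem hnotin]
          have hn : 0 < n := i.pos
          have : n - (s.card + 1) = n - 1 - s.card := by omega
          rw [this, pow_succ]
          ring
      _ = t := by rw [← Finset.mul_sum, this, mul_one]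
  rw [h1, h2, zero_add]

end Shearer

/-- Shearer's lemma for i.i.d. random subsets: if `S` includes each index independently
with probability `t`, then `E_S[H(X_S)] ≥ t·H(Xⁿ)`. -/
theorem shearer_iid_subsets (n : ℕ) (p : (Fin n → Bool) → ℝ) (hp : IsPMF p)
    (t : ℝ) (ht0 : 0 ≤ t) (ht1 : t ≤ 1) :
    t * H2 p ≤ ∑ s : Finset (Fin n),
      (t ^ s.card * (1 - t) ^ (n - s.card)) * H2 (maskPMF n p s) := by
  obtain ⟨hp0, hp1⟩ := hp
  have hw0 : ∀ s : Finset (Fin n), 0 ≤ t ^ s.card * (1 - t) ^ (n - s.card) :=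
    fun s => mul_nonneg (pow_nonneg ht0 _) (pow_nonneg (by linarith) _)
  -- Step A : chain-rule lower bound for each subset s
  have hA : ∀ s : Finset (Fin n),
      ∑ i ∈ s, (H2 (maskPMF n p (Finset.Iic i)) - H2 (maskPMF n p (Finset.Iio i)))
        ≤ H2 (maskPMF n p s) := by
    intro s
    have htele := Shearer.tele (fun u => H2 (maskPMF n p u)) s
    have hterm : ∀ i ∈ s,
        H2 (maskPMF n p (Finset.Iic i)) - H2 (maskPMF n p (Finset.Iio i))
          ≤ H2 (maskPMF n p (s ∩ Finset.Iic i)) - H2 (maskPMF n p (s ∩ Finset.Iio i)) := by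
      intro i hi
      have hsub := Shearer.submod p ⟨hp0, hp1⟩ (insert i (s ∩ Finset.Iio i)) (Finset.Iio i)
      have e1 : insert i (s ∩ Finset.Iio i) ∪ Finset.Iio i = Finset.Iic i := by
        ext k
        simp only [Finset.mem_union, Finset.mem_insert, Finset.mem_inter, Finset.mem_Iio,
          Finset.mem_Iic]
        constructor
        · rintro ((rfl | ⟨_, h⟩) | h)
          exacts [le_refl _, h.le, h.le]
        · intro h
          rcases eq_or_lt_of_le h with rfl | h
          exacts [Or.inl (Or.inl rfl), Or.inr h]
      have e2 : insert i (s ∩ Finset.Iio i) ∩ Finset.Iio i = s ∩ Finset.Iio i := by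
        ext k
        simp only [Finset.mem_inter, Finset.mem_insert, Finset.mem_Iio]
        constructor
        · rintro ⟨rfl | ⟨hk, _⟩, hlt⟩
          · exact absurd hlt (lt_irrefl _)
          · exact ⟨hk, hlt⟩
        · rintro ⟨hk, hlt⟩
          exact ⟨Or.inr ⟨hk, hlt⟩, hlt⟩
      have e3 : insert i (s ∩ Finset.Iio i) = s ∩ Finset.Iic i := by
        ext k
        simp only [Finset.mem_insert, Finset.mem_inter, Finset.mem_Iio, Finset.mem_Iic]
        constructor
        · rintro (rfl | ⟨hk, hlt⟩)
          exacts [⟨hi, le_refl _⟩, ⟨hk, hlt.le⟩]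
        · rintro ⟨hk, hle⟩
          rcases eq_or_lt_of_le hle with rfl | hlt
          exacts [Or.inl rfl, Or.inr ⟨hk, hlt⟩]
      rw [e1, e2, e3] at hsub
      linarith
    calc ∑ i ∈ s, (H2 (maskPMF n p (Finset.Iic i)) - H2 (maskPMF n p (Finset.Iio i)))
        ≤ ∑ i ∈ s, (H2 (maskPMF n p (s ∩ Finset.Iic i)) - H2 (maskPMF n p (s ∩ Finset.Iio i))) :=
          Finset.sum_le_sum hterm
      _ = H2 (maskPMF n p s) - H2 (maskPMF n p ∅) := htele
      _ = H2 (maskPMF n p s) := by rw [Shearer.h_empty p hp1, sub_zero]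
  -- Step B : the weighted sum of the lower bounds equals t * H2 p
  have hC : ∑ s : Finset (Fin n), (t ^ s.card * (1 - t) ^ (n - s.card))
        * (∑ i ∈ s, (H2 (maskPMF n p (Finset.Iic i)) - H2 (maskPMF n p (Finset.Iio i))))
      = t * H2 p := by
    calc ∑ s : Finset (Fin n), (t ^ s.card * (1 - t) ^ (n - s.card))
          * (∑ i ∈ s, (H2 (maskPMF n p (Finset.Iic i)) - H2 (maskPMF n p (Finset.Iio i))))
        = ∑ s : Finset (Fin n), ∑ i : Fin n, (if i ∈ s then
            (t ^ s.card * (1 - t) ^ (n - s.card))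
              * (H2 (maskPMF n p (Finset.Iic i)) - H2 (maskPMF n p (Finset.Iio i))) else 0) := by
          refine Finset.sum_congr rfl fun s _ => ?_
          rw [Finset.sum_ite_mem, Finset.univ_inter, Finset.mul_sum]
      _ = ∑ i : Fin n, ∑ s : Finset (Fin n), (if i ∈ s then
            (t ^ s.card * (1 - t) ^ (n - s.card))
              * (H2 (maskPMF n p (Finset.Iic i)) - H2 (maskPMF n p (Finset.Iio i))) else 0) :=
          Finset.sum_comm
      _ = ∑ i : Fin n,
            t * (H2 (maskPMF n p (Finset.Iic i)) - H2 (maskPMF n p (Finset.Iio i))) := by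
          refine Finset.sum_congr rfl fun i _ => ?_
          have hsplit : ∀ s : Finset (Fin n), (if i ∈ s then
              (t ^ s.card * (1 - t) ^ (n - s.card))
                * (H2 (maskPMF n p (Finset.Iic i)) - H2 (maskPMF n p (Finset.Iio i))) else 0)
              = (if i ∈ s then t ^ s.card * (1 - t) ^ (n - s.card) else 0)
                * (H2 (maskPMF n p (Finset.Iic i)) - H2 (maskPMF n p (Finset.Iio i))) :=
            fun s => by split_ifs <;> simp
          rw [Finset.sum_congr rfl fun s _ => hsplit s, ← Finset.sum_mul, Shearer.wsum t i]
      _ = t * ∑ i : Fin n,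
            (H2 (maskPMF n p (Finset.Iic i)) - H2 (maskPMF n p (Finset.Iio i))) := by
          rw [Finset.mul_sum]
      _ = t * H2 p := by
          congr 1
          have htele := Shearer.tele (fun u => H2 (maskPMF n p u)) Finset.univ
          simp only [Finset.univ_inter] at htele
          rw [htele, Shearer.h_univ, Shearer.h_empty p hp1, sub_zero]
  rw [← hC]
  exact Finset.sum_le_sum fun s _ => mul_le_mul_of_nonneg_left (hA s) (hw0 s)
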